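/- Let G ⊂ SL(2,ℂ) be a finite subgroup and P ∈ ℂ[x,y]. Then P(0,0) = 0 and P is fixed by the G-action on ℂ[x,y] if and only if there exists a pair (f₁, f₂) ∈ ℂ[x,y]² fixed by the G-action on endomorphisms such that f₁y − f₂x = P. -/

import Mathlib

open MvPolynomial
open MvPolynomial

/-- Substitution of a linear map (given by a 2×2 matrix) into a polynomial in two
variables: `(P ∘ M)(v) = P (M v)`.  In particular, `subst M⁻¹ P` is the polynomial
`P ∘ M⁻¹`, i.e. the action `g · P = P ∘ g⁻¹`. -/
noncomputable def subst (M : Matrix (Fin 2) (Fin 2) ℂ) (P : MvPolynomial (Fin 2) ℂ) :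
    MvPolynomial (Fin 2) ℂ :=
  aeval (fun i => ∑ j, C (M i j) * X j) P

/-- The action of `g ∈ SL(2,ℂ)` on polynomial endomorphisms `F = (f₁, f₂)` of 𝔸²,
given by `g · F = g ∘ F ∘ g⁻¹`. -/
noncomputable def pairAct (g : Matrix.SpecialLinearGroup (Fin 2) ℂ)
    (F : Fin 2 → MvPolynomial (Fin 2) ℂ) : Fin 2 → MvPolynomial (Fin 2) ℂ :=
  fun i => ∑ j, C ((g : Matrix (Fin 2) (Fin 2) ℂ) i j) *
    subst ((g⁻¹ : Matrix.SpecialLinearGroup (Fin 2) ℂ) : Matrix (Fin 2) (Fin 2) ℂ) (F j)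

/-! ### Auxiliary lemmas -/

lemma subst_C (M : Matrix (Fin 2) (Fin 2) ℂ) (c : ℂ) : subst M (C c) = C c := by
  simp [subst, algebraMap_eq]

lemma subst_X (M : Matrix (Fin 2) (Fin 2) ℂ) (i : Fin 2) :
    subst M (X i) = ∑ j, C (M i j) * X j := aeval_X _ _

lemma subst_mul (M : Matrix (Fin 2) (Fin 2) ℂ) (p q : MvPolynomial (Fin 2) ℂ) :
    subst M (p * q) = subst M p * subst M q := map_mul _ _ _

lemma subst_sub (M : Matrix (Fin 2) (Fin 2) ℂ) (p q : MvPolynomial (Fin 2) ℂ) :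
    subst M (p - q) = subst M p - subst M q := map_sub _ _ _

lemma subst_sum {ι : Type*} (M : Matrix (Fin 2) (Fin 2) ℂ) (s : Finset ι)
    (f : ι → MvPolynomial (Fin 2) ℂ) :
    subst M (∑ x ∈ s, f x) = ∑ x ∈ s, subst M (f x) := map_sum _ _ _

lemma subst_subst (M N : Matrix (Fin 2) (Fin 2) ℂ) (P : MvPolynomial (Fin 2) ℂ) :
    subst M (subst N P) = subst (N * M) P := by
  unfold subst
  have hfun : (fun i => (aeval (fun i' => ∑ j, C (M i' j) * X j)) (∑ j, C (N i j) * X j))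
      = fun i => ∑ j, C ((N * M) i j) * X j := by
    funext i
    simp only [map_sum, map_mul, aeval_C, aeval_X, algebraMap_eq, Finset.mul_sum]
    rw [Finset.sum_comm]
    refine Finset.sum_congr rfl fun k _ => ?_
    rw [Matrix.mul_apply, map_sum, Finset.sum_mul]
    refine Finset.sum_congr rfl fun j _ => ?_
    rw [map_mul]; ring
  rw [show (aeval (fun i => ∑ j, C (M i j) * X j))
        ((aeval (fun i => ∑ j, C (N i j) * X j)) P)
      = ((aeval (fun i => ∑ j, C (M i j) * X j)).comp
          (aeval (fun i => ∑ j, C (N i j) * X j))) P from rfl,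
    comp_aeval, hfun]

lemma pairAct_mul (g g' : Matrix.SpecialLinearGroup (Fin 2) ℂ)
    (F : Fin 2 → MvPolynomial (Fin 2) ℂ) :
    pairAct g (pairAct g' F) = pairAct (g * g') F := by
  funext i
  have hco : ((g'⁻¹ : Matrix.SpecialLinearGroup (Fin 2) ℂ) : Matrix (Fin 2) (Fin 2) ℂ)
      * ((g⁻¹ : Matrix.SpecialLinearGroup (Fin 2) ℂ) : Matrix (Fin 2) (Fin 2) ℂ)
      = (((g * g')⁻¹ : Matrix.SpecialLinearGroup (Fin 2) ℂ) : Matrix (Fin 2) (Fin 2) ℂ) := by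
    rw [mul_inv_rev, Matrix.SpecialLinearGroup.coe_mul]
  simp only [pairAct, subst_sum, subst_mul, subst_C, subst_subst, hco, Finset.mul_sum]
  rw [Finset.sum_comm]
  refine Finset.sum_congr rfl fun k _ => ?_
  rw [Matrix.SpecialLinearGroup.coe_mul, Matrix.mul_apply, map_sum, Finset.sum_mul]
  refine Finset.sum_congr rfl fun j _ => ?_
  rw [map_mul]; ring

lemma W_pairAct (g : Matrix.SpecialLinearGroup (Fin 2) ℂ)
    (F : Fin 2 → MvPolynomial (Fin 2) ℂ) :
    (pairAct g F) 0 * X 1 - (pairAct g F) 1 * X 0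
      = subst ((g⁻¹ : Matrix.SpecialLinearGroup (Fin 2) ℂ) : Matrix (Fin 2) (Fin 2) ℂ)
          (F 0 * X 1 - F 1 * X 0) := by
  have hinv : ((g⁻¹ : Matrix.SpecialLinearGroup (Fin 2) ℂ) : Matrix (Fin 2) (Fin 2) ℂ)
      = !![(g : Matrix (Fin 2) (Fin 2) ℂ) 1 1, -((g : Matrix (Fin 2) (Fin 2) ℂ) 0 1);
           -((g : Matrix (Fin 2) (Fin 2) ℂ) 1 0), (g : Matrix (Fin 2) (Fin 2) ℂ) 0 0] := by
    rw [Matrix.SpecialLinearGroup.coe_inv, Matrix.adjugate_fin_two]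
  have h00 : ((g⁻¹ : Matrix.SpecialLinearGroup (Fin 2) ℂ) : Matrix (Fin 2) (Fin 2) ℂ) 0 0
      = (g : Matrix (Fin 2) (Fin 2) ℂ) 1 1 := by rw [hinv]; simp
  have h01 : ((g⁻¹ : Matrix.SpecialLinearGroup (Fin 2) ℂ) : Matrix (Fin 2) (Fin 2) ℂ) 0 1
      = -(g : Matrix (Fin 2) (Fin 2) ℂ) 0 1 := by rw [hinv]; simp
  have h10 : ((g⁻¹ : Matrix.SpecialLinearGroup (Fin 2) ℂ) : Matrix (Fin 2) (Fin 2) ℂ) 1 0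
      = -(g : Matrix (Fin 2) (Fin 2) ℂ) 1 0 := by rw [hinv]; simp
  have h11 : ((g⁻¹ : Matrix.SpecialLinearGroup (Fin 2) ℂ) : Matrix (Fin 2) (Fin 2) ℂ) 1 1
      = (g : Matrix (Fin 2) (Fin 2) ℂ) 0 0 := by rw [hinv]; simp
  rw [subst_sub, subst_mul, subst_mul, subst_X, subst_X]
  simp only [pairAct, Fin.sum_univ_two, h00, h01, h10, h11, map_neg]
  ring

lemma pairAct_smulsum {ι : Type*} (g : Matrix.SpecialLinearGroup (Fin 2) ℂ) (c : ℂ)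
    (s : Finset ι) (H : ι → Fin 2 → MvPolynomial (Fin 2) ℂ) :
    pairAct g (fun i => C c * ∑ x ∈ s, H x i)
      = fun i => C c * ∑ x ∈ s, pairAct g (H x) i := by
  funext i
  simp only [pairAct, subst_mul, subst_C, subst_sum, Finset.mul_sum]
  rw [Finset.sum_comm]
  exact Finset.sum_congr rfl fun x _ => Finset.sum_congr rfl fun j _ => by ring

lemma lift_of_constantCoeff_zero (P : MvPolynomial (Fin 2) ℂ)
    (h : constantCoeff P = 0) :
    ∃ a b : MvPolynomial (Fin 2) ℂ, a * X 0 + b * X 1 = P := by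
  rw [← Ideal.mem_span_pair]
  have himg : (X '' (Set.univ : Set (Fin 2)) : Set (MvPolynomial (Fin 2) ℂ))
      = {X 0, X 1} := by
    ext q
    constructor
    · rintro ⟨i, -, rfl⟩
      fin_cases i <;> simp
    · rintro (rfl | rfl)
      exacts [⟨0, Set.mem_univ _, rfl⟩, ⟨1, Set.mem_univ _, rfl⟩]
  rw [← himg, mem_ideal_span_X_image]
  intro m hm
  by_contra hc
  push_neg at hc
  have hm0 : m = 0 := Finsupp.ext fun i => by simpa using hc i (Set.mem_univ i)
  rw [mem_support_iff, hm0] at hm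
  exact hm h

theorem stmt8 (G : Subgroup (Matrix.SpecialLinearGroup (Fin 2) ℂ))
    (hGfin : (G : Set (Matrix.SpecialLinearGroup (Fin 2) ℂ)).Finite)
    (P : MvPolynomial (Fin 2) ℂ) :
    (eval (0 : Fin 2 → ℂ) P = 0 ∧
        ∀ g ∈ G, subst ((g⁻¹ : Matrix.SpecialLinearGroup (Fin 2) ℂ) : Matrix (Fin 2) (Fin 2) ℂ) P = P) ↔
      ∃ F : Fin 2 → MvPolynomial (Fin 2) ℂ,
        (∀ g ∈ G, pairAct g F = F) ∧ F 0 * X 1 - F 1 * X 0 = P := by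
  constructor
  · rintro ⟨h0, hinvP⟩
    obtain ⟨a, b, hab⟩ := lift_of_constantCoeff_zero P (by rwa [← eval_zero])
    set F0 : Fin 2 → MvPolynomial (Fin 2) ℂ := ![b, -a] with hF0
    have hW0 : F0 0 * X 1 - F0 1 * X 0 = P := by
      simp only [hF0, Matrix.cons_val_zero, Matrix.cons_val_one, Matrix.head_cons]
      rw [← hab]; ring
    haveI : Fintype ↥G := hGfin.fintype
    haveI : Nonempty ↥G := ⟨1, G.one_mem⟩
    set n : ℕ := Fintype.card ↥G with hn
    have hnne : (n : ℂ) ≠ 0 := Nat.cast_ne_zero.mpr Fintype.card_ne_zero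
    refine ⟨fun i => C ((n : ℂ)⁻¹) * ∑ x : ↥G, pairAct (↑x) F0 i, ?_, ?_⟩
    · intro g hg
      rw [pairAct_smulsum]
      funext i
      refine congrArg (fun t => C ((n : ℂ)⁻¹) * t) ?_
      simp only [pairAct_mul]
      rw [← Equiv.sum_comp (Equiv.mulLeft (⟨g, hg⟩ : G)) (fun x : ↥G => pairAct (↑x) F0 i)]
      simp only [Equiv.coe_mulLeft, Subgroup.coe_mul]
    · have hrw : ∀ x : ↥G, (pairAct (↑x) F0) 0 * X 1 - (pairAct (↑x) F0) 1 * X 0 = P := by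
        intro x
        rw [W_pairAct, hW0]
        exact hinvP (↑x) x.2
      show (C ((n : ℂ)⁻¹) * ∑ x : ↥G, pairAct (↑x) F0 0) * X 1
          - (C ((n : ℂ)⁻¹) * ∑ x : ↥G, pairAct (↑x) F0 1) * X 0 = P
      calc (C ((n : ℂ)⁻¹) * ∑ x : ↥G, pairAct (↑x) F0 0) * X 1
            - (C ((n : ℂ)⁻¹) * ∑ x : ↥G, pairAct (↑x) F0 1) * X 0
          = C ((n : ℂ)⁻¹) * ∑ x : ↥G,
              ((pairAct (↑x) F0) 0 * X 1 - (pairAct (↑x) F0) 1 * X 0) := by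
            rw [Finset.mul_sum, Finset.mul_sum, Finset.mul_sum, Finset.sum_mul, Finset.sum_mul,
              ← Finset.sum_sub_distrib]
            exact Finset.sum_congr rfl fun x _ => by ring
        _ = C ((n : ℂ)⁻¹) * ∑ _x : ↥G, P := by
            rw [Finset.sum_congr rfl fun x _ => hrw x]
        _ = P := by
            rw [Finset.sum_const, Finset.card_univ, nsmul_eq_mul,
              ← map_natCast (C : ℂ →+* MvPolynomial (Fin 2) ℂ) n,
              ← mul_assoc, ← C_mul, inv_mul_cancel₀ hnne, C_1, one_mul]
  · rintro ⟨F, hFfix, hW⟩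
    constructor
    · rw [← hW]; simp
    · intro g hg
      rw [← hW, ← W_pairAct, hFfix g hg]
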